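/- If X is a Banach space continuously embedded in L^1(0,1) such that W^{1,2}_0(0,1) embeds compactly into X, then the particle density operator N_f : L^1(0,1) → X is well defined and continuous. -/

import Mathlib

open MeasureTheory Topology Filter
set_option synthInstance.maxHeartbeats 1000000 in

/-- Corollary 4.8: if `X` is a Banach space continuously (and injectively) embedded in
`L¹(0,1)` such that `W^{1,2}_0(0,1)` embeds compactly into `X`, then the particle
density operator `N_f : L¹(0,1) → X` is well defined and continuous. The particle
density operator is encoded by its `W^{1,2}_0`-valued lift `NfW` (Theorem 4.7: `N_f`
maps `L¹`-bounded sets into `W^{1,2}_0`-bounded sets and is continuous into `L¹`);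
`e : W → X` is the compact embedding and `j : X → L¹` the continuous injection. -/
theorem stmt_13
    {W X : Type*} [NormedAddCommGroup W] [NormedSpace ℝ W]
    [NormedAddCommGroup X] [NormedSpace ℝ X] [CompleteSpace X]
    (j : X →L[ℝ] (Lp ℝ 1 (volume.restrict (Set.Ioo (0:ℝ) 1))))
    (hj : Function.Injective j)
    (e : W →L[ℝ] X) (he : IsCompactOperator e)
    (Nf : Lp ℝ 1 (volume.restrict (Set.Ioo (0:ℝ) 1)) →
      Lp ℝ 1 (volume.restrict (Set.Ioo (0:ℝ) 1)))
    (NfW : Lp ℝ 1 (volume.restrict (Set.Ioo (0:ℝ) 1)) → W)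
    (hfac : ∀ V, j (e (NfW V)) = Nf V)
    (hbdd : ∀ M : Set (Lp ℝ 1 (volume.restrict (Set.Ioo (0:ℝ) 1))),
      Bornology.IsBounded M → Bornology.IsBounded (NfW '' M))
    (hcont : Continuous Nf) :
    Continuous fun V => e (NfW V) := by
  rw [continuous_iff_seqContinuous]
  intro V Vlim hV
  -- The set consisting of the sequence and its limit is compact, hence bounded.
  have hScomp : IsCompact (insert Vlim (Set.range V)) := hV.isCompact_insert_range
  have hSbdd : Bornology.IsBounded (insert Vlim (Set.range V)) := hScomp.isBounded
  -- Its image under `NfW` is bounded, so under `e` it is relatively compact.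
  have hMB : Bornology.IsBounded (NfW '' insert Vlim (Set.range V)) := hbdd _ hSbdd
  have hK : IsCompact (closure (e '' (NfW '' insert Vlim (Set.range V)))) :=
    IsCompactOperator.isCompact_closure_image_of_bounded (f := (e : W →ₗ[ℝ] X)) he hMB
  -- It suffices that every subsequence has a sub-subsequence converging to the claimed limit.
  apply Filter.tendsto_of_subseq_tendsto
  intro ns hns
  have hmem : ∀ n, (fun m => e (NfW (V m))) (ns n) ∈
      closure (e '' (NfW '' insert Vlim (Set.range V))) := by
    intro n
    exact subset_closure ⟨NfW (V (ns n)), ⟨V (ns n), Or.inr ⟨ns n, rfl⟩, rfl⟩, rfl⟩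
  obtain ⟨x, _, φ, hφ, hlim⟩ := hK.tendsto_subseq hmem
  refine ⟨φ, ?_⟩
  -- Identify the limit via the injective continuous map `j`.
  have hns' : Filter.Tendsto (fun n => ns (φ n)) Filter.atTop Filter.atTop :=
    hns.comp hφ.tendsto_atTop
  have h1 : Filter.Tendsto (fun n => j ((fun m => e (NfW (V m))) (ns (φ n))))
      Filter.atTop (𝓝 (Nf Vlim)) := by
    simp only [hfac]
    exact (hcont.continuousAt.tendsto.comp hV).comp hns'
  have h2 : Filter.Tendsto (fun n => j ((fun m => e (NfW (V m))) (ns (φ n))))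
      Filter.atTop (𝓝 (j x)) := (j.continuous.tendsto x).comp hlim
  have hx : x = e (NfW Vlim) := hj (by
    rw [hfac]
    exact tendsto_nhds_unique h2 h1)
  simpa [Function.comp_def, hx] using hlim
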